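/- Let α₁, α₂ : [0,1] → ℝ² be continuously differentiable curves parametrized by arc length (|α₁'(s)| = |α₂'(t)| = 1 for all s, t), satisfying α₁'(s)·(1,0) > 1/√2 and α₂'(t)·(0,1) > 1/√2 for all s, t ∈ (0,1). Then the laminar map f(s,t) = α₁(s) + α₂(t) is injective on [0,1]². -/

import Mathlib

open Set

private lemma aux_mono (g g' : ℝ → ℝ)
    (hd : ∀ x ∈ Icc (0:ℝ) 1, HasDerivWithinAt g (g' x) (Icc 0 1) x)
    (hpos : ∀ x ∈ Ioo (0:ℝ) 1, 0 < g' x) : StrictMonoOn g (Icc 0 1) := by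
  apply strictMonoOn_of_deriv_pos (convex_Icc 0 1)
  · exact fun x hx => (hd x hx).continuousWithinAt
  · intro x hx
    rw [interior_Icc] at hx
    have h := (hd x (Ioo_subset_Icc_self hx)).hasDerivAt (Icc_mem_nhds hx.1 hx.2)
    rw [h.deriv]
    exact hpos x hx

private lemma aux_pt (a b ε : ℝ) (h1 : a ^ 2 + b ^ 2 = 1) (h2 : a > 1 / Real.sqrt 2)
    (hε : ε = 1 ∨ ε = -1) : 0 < a + ε * b := by
  have hs : Real.sqrt 2 > 0 := by positivity
  have hsq : (1 / Real.sqrt 2) ^ 2 = 1 / 2 := by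
    rw [div_pow, Real.sq_sqrt (by norm_num : (2:ℝ) ≥ 0)]; norm_num
  have ha2 : a ^ 2 > 1 / 2 := by
    have h' := mul_self_lt_mul_self (by positivity : (0:ℝ) ≤ 1 / Real.sqrt 2) h2
    nlinarith [hsq]
  have hb2 : b ^ 2 < 1 / 2 := by linarith
  have ha : a > 0 := lt_trans (by positivity) h2
  rcases hε with rfl | rfl <;> nlinarith [sq_nonneg (a + b), sq_nonneg (a - b)]

private lemma aux_proj (α α' : ℝ → EuclideanSpace ℝ (Fin 2)) (i : Fin 2)
    (hd : ∀ x ∈ Icc (0:ℝ) 1, HasDerivWithinAt α (α' x) (Icc 0 1) x)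
    (s : ℝ) (hs : s ∈ Icc (0:ℝ) 1) :
    HasDerivWithinAt (fun x => α x i) (α' s i) (Icc 0 1) s := by
  have := (EuclideanSpace.proj (𝕜 := ℝ) i).hasFDerivAt.comp_hasDerivWithinAt s (hd s hs)
  exact this

/-- Injectivity of laminar maps: if `α₁, α₂ : [0,1] → ℝ²` are `C¹` unit-speed curves
whose tangents stay within 45° of the `x`- and `y`-directions respectively, then the
laminar map `f(s,t) = α₁(s) + α₂(t)` is injective on `[0,1]²`. -/
theorem stmt_6 (α₁ α₂ α₁' α₂' : ℝ → EuclideanSpace ℝ (Fin 2))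
    (hd₁ : ∀ s ∈ Icc (0:ℝ) 1, HasDerivWithinAt α₁ (α₁' s) (Icc 0 1) s)
    (hd₂ : ∀ t ∈ Icc (0:ℝ) 1, HasDerivWithinAt α₂ (α₂' t) (Icc 0 1) t)
    (hc₁ : ContinuousOn α₁' (Icc 0 1)) (hc₂ : ContinuousOn α₂' (Icc 0 1))
    (hu₁ : ∀ s ∈ Icc (0:ℝ) 1, ‖α₁' s‖ = 1) (hu₂ : ∀ t ∈ Icc (0:ℝ) 1, ‖α₂' t‖ = 1)
    (hang₁ : ∀ s ∈ Ioo (0:ℝ) 1, (α₁' s) 0 > 1 / Real.sqrt 2)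
    (hang₂ : ∀ t ∈ Ioo (0:ℝ) 1, (α₂' t) 1 > 1 / Real.sqrt 2) :
    Set.InjOn (fun q : ℝ × ℝ => α₁ q.1 + α₂ q.2) (Icc 0 1 ×ˢ Icc 0 1) := by
  -- sum of squares facts
  have hsum₁ : ∀ s ∈ Icc (0:ℝ) 1, (α₁' s 0) ^ 2 + (α₁' s 1) ^ 2 = 1 := by
    intro s hs
    have h := hu₁ s hs
    rw [EuclideanSpace.norm_eq] at h
    simp only [Real.norm_eq_abs, sq_abs] at h
    have h2 : (∑ i, α₁' s i ^ 2) = 1 := Real.sqrt_eq_one.mp h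
    simpa [Fin.sum_univ_two] using h2
  have hsum₂ : ∀ t ∈ Icc (0:ℝ) 1, (α₂' t 1) ^ 2 + (α₂' t 0) ^ 2 = 1 := by
    intro t ht
    have h := hu₂ t ht
    rw [EuclideanSpace.norm_eq] at h
    simp only [Real.norm_eq_abs, sq_abs] at h
    have h2 : (∑ i, α₂' t i ^ 2) = 1 := Real.sqrt_eq_one.mp h
    have := h2
    rw [Fin.sum_univ_two] at this
    linarith
  -- strictly monotone projections
  have m1 : ∀ ε : ℝ, ε = 1 ∨ ε = -1 →
      StrictMonoOn (fun s => α₁ s 0 + ε * α₁ s 1) (Icc 0 1) := by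
    intro ε hε
    apply aux_mono _ (fun s => α₁' s 0 + ε * α₁' s 1)
    · intro s hs
      exact (aux_proj α₁ α₁' 0 hd₁ s hs).add ((aux_proj α₁ α₁' 1 hd₁ s hs).const_mul ε)
    · intro s hs
      exact aux_pt _ _ _ (hsum₁ s (Ioo_subset_Icc_self hs)) (hang₁ s hs) hε
  have m2 : ∀ ε : ℝ, ε = 1 ∨ ε = -1 →
      StrictMonoOn (fun t => α₂ t 1 + ε * α₂ t 0) (Icc 0 1) := by
    intro ε hε
    apply aux_mono _ (fun t => α₂' t 1 + ε * α₂' t 0)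
    · intro t ht
      exact (aux_proj α₂ α₂' 1 hd₂ t ht).add ((aux_proj α₂ α₂' 0 hd₂ t ht).const_mul ε)
    · intro t ht
      exact aux_pt _ _ _ (hsum₂ t (Ioo_subset_Icc_self ht)) (hang₂ t ht) hε
  rintro ⟨s₁, t₁⟩ ⟨hs₁, ht₁⟩ ⟨s₂, t₂⟩ ⟨hs₂, ht₂⟩ heq
  simp only at heq
  have h0 : α₁ s₁ 0 + α₂ t₁ 0 = α₁ s₂ 0 + α₂ t₂ 0 := by
    have := congrArg (fun v => v 0) heq; simpa using this
  have h1 : α₁ s₁ 1 + α₂ t₁ 1 = α₁ s₂ 1 + α₂ t₂ 1 := by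
    have := congrArg (fun v => v 1) heq; simpa using this
  have mp := m1 1 (Or.inl rfl)
  have mm := m1 (-1) (Or.inr rfl)
  have np := m2 1 (Or.inl rfl)
  have nm := m2 (-1) (Or.inr rfl)
  have hss : s₁ = s₂ := by
    rcases lt_trichotomy s₁ s₂ with h | h | h
    · have A := mp hs₁ hs₂ h
      have B := mm hs₁ hs₂ h
      simp only at A B
      have C : (fun t => α₂ t 1 + 1 * α₂ t 0) t₂ < (fun t => α₂ t 1 + 1 * α₂ t 0) t₁ := by
        simp only; linarith
      have D : (fun t => α₂ t 1 + (-1) * α₂ t 0) t₁ < (fun t => α₂ t 1 + (-1) * α₂ t 0) t₂ := by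
        simp only; linarith
      have hC := ((np.lt_iff_lt ht₂ ht₁).mp C)
      have hD := ((nm.lt_iff_lt ht₁ ht₂).mp D)
      linarith
    · exact h
    · have A := mp hs₂ hs₁ h
      have B := mm hs₂ hs₁ h
      simp only at A B
      have C : (fun t => α₂ t 1 + 1 * α₂ t 0) t₁ < (fun t => α₂ t 1 + 1 * α₂ t 0) t₂ := by
        simp only; linarith
      have D : (fun t => α₂ t 1 + (-1) * α₂ t 0) t₂ < (fun t => α₂ t 1 + (-1) * α₂ t 0) t₁ := by
        simp only; linarith
      have hC := ((np.lt_iff_lt ht₁ ht₂).mp C)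
      have hD := ((nm.lt_iff_lt ht₂ ht₁).mp D)
      linarith
  subst hss
  have htt : t₁ = t₂ := by
    apply np.injOn ht₁ ht₂
    simp only; linarith
  simp [htt]
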